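/- A graph has a representation as a vertex-intersection graph of subtrees of a tree (a clique-tree) if and only if it is chordal. -/

import Mathlib

namespace Paper

/-- Has vertex `v` already been matched by the edge list `M`? -/
def matchedB {n : ℕ} (M : List (Fin n × Fin n)) (v : Fin n) : Bool :=
  M.any fun e => e.1 = v || e.2 = v

/-- One step of the greedy matching algorithm: process vertex `i`; if it is unmatched
and has an unmatched neighbour, match it to the unmatched neighbour of smallest index. -/
def greedyStep {n : ℕ} (G : SimpleGraph (Fin n)) [DecidableRel G.Adj]
    (M : List (Fin n × Fin n)) (i : Fin n) : List (Fin n × Fin n) :=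
  if matchedB M i then M
  else
    if h : (Finset.univ.filter fun j => G.Adj i j ∧ matchedB M j = false).Nonempty then
      (i, (Finset.univ.filter fun j => G.Adj i j ∧ matchedB M j = false).min' h) :: M
    else M

/-- The greedy matching algorithm, processing the vertices `v_1, …, v_n` in order. -/
def greedy {n : ℕ} (G : SimpleGraph (Fin n)) [DecidableRel G.Adj] : List (Fin n × Fin n) :=
  (List.finRange n).foldl (greedyStep G) []

/-- The partial matching produced by the greedy algorithm after processing the
first `k` vertices. -/
def greedyPrefix {n : ℕ} (G : SimpleGraph (Fin n)) [DecidableRel G.Adj] (k : ℕ) :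
    List (Fin n × Fin n) :=
  ((List.finRange n).take k).foldl (greedyStep G) []

/-- One step of the delayed greedy algorithm: state is (matching, free set `F`);
when processing `j`, if `j` has a neighbour in `F`, match `j` to the smallest-index
such neighbour and remove it from `F`; otherwise add `j` to `F`. -/
def delayedStep {n : ℕ} (G : SimpleGraph (Fin n)) [DecidableRel G.Adj]
    (s : List (Fin n × Fin n) × Finset (Fin n)) (j : Fin n) :
    List (Fin n × Fin n) × Finset (Fin n) :=
  if h : (s.2.filter fun i => G.Adj i j).Nonempty then
    (((s.2.filter fun i => G.Adj i j).min' h, j) :: s.1,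
      s.2.erase ((s.2.filter fun i => G.Adj i j).min' h))
  else (s.1, insert j s.2)

/-- The delayed greedy matching algorithm. -/
def delayedGreedy {n : ℕ} (G : SimpleGraph (Fin n)) [DecidableRel G.Adj] :
    List (Fin n × Fin n) :=
  ((List.finRange n).foldl (delayedStep G) ([], ∅)).1

/-- `M` is a matching of `G`: its members are edges of `G` and are pairwise
vertex-disjoint. -/
def IsMatchingL {n : ℕ} (G : SimpleGraph (Fin n)) (M : List (Fin n × Fin n)) : Prop :=
  (∀ e ∈ M, G.Adj e.1 e.2) ∧
    ∀ e ∈ M, ∀ f ∈ M, e ≠ f → e.1 ≠ f.1 ∧ e.1 ≠ f.2 ∧ e.2 ≠ f.1 ∧ e.2 ≠ f.2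

/-- A finite rooted tree on node set `Fin N`, given by a parent function and a
depth function (distance to the root). -/
structure RootedTree (N : ℕ) where
  parent : Fin N → Fin N
  root : Fin N
  depth : Fin N → ℕ
  depth_root : depth root = 0
  parent_root : parent root = root
  depth_parent : ∀ i, i ≠ root → depth (parent i) + 1 = depth i

/-- `T.Anc u w` : node `u` is an ancestor (possibly equal) of node `w`. -/
def RootedTree.Anc {N : ℕ} (T : RootedTree N) (u w : Fin N) : Prop :=
  ∃ k : ℕ, T.parent^[k] w = u

/-- A node is a leaf if it has no children. -/
def RootedTree.IsLeaf {N : ℕ} (T : RootedTree N) (u : Fin N) : Prop :=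
  ∀ w, T.parent w = u → w = u

/-- The data of an RDV representation: a rooted host tree `T` and, for each vertex `v`,
a downward path `P(v)` going from its top node `t v` down to its bottom node `b v`. -/
structure RDVData (N n : ℕ) where
  T : RootedTree N
  t : Fin n → Fin N
  b : Fin n → Fin N
  downward : ∀ v, T.Anc (t v) (b v)

/-- The node `u` lies on the downward path `P(v)`. -/
def RDVData.onPath {N n : ℕ} (R : RDVData N n) (v : Fin n) (u : Fin N) : Prop :=
  R.T.Anc (R.t v) u ∧ R.T.Anc u (R.b v)

/-- `R` is an RDV representation of `G`: distinct vertices are adjacent iff their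
downward paths share a node. -/
def RDVData.IsRep {N n : ℕ} (R : RDVData N n) (G : SimpleGraph (Fin n)) : Prop :=
  ∀ u w : Fin n, u ≠ w → (G.Adj u w ↔ ∃ node, R.onPath u node ∧ R.onPath w node)

/-- The identity enumeration `v_1, …, v_n` (i.e. the order on `Fin n`) is a bottom-up
enumeration: vertices are sorted by decreasing depth of the top node `t v`. -/
def RDVData.BottomUp {N n : ℕ} (R : RDVData N n) : Prop :=
  ∀ i j : Fin n, i ≤ j → R.T.depth (R.t j) ≤ R.T.depth (R.t i)

/-- A planar (left-to-right) coordinate structure on a rooted tree: an injective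
index on the leaves so that the leaf descendants of every node occupy a contiguous
range of indices, together with the leftmost leaf descendant `lmost` and rightmost
leaf descendant `rmost` of every node. -/
structure PlanarCoords {N : ℕ} (T : RootedTree N) where
  idx : Fin N → ℕ
  lmost : Fin N → Fin N
  rmost : Fin N → Fin N
  idx_inj : ∀ u w, T.IsLeaf u → T.IsLeaf w → idx u = idx w → u = w
  lmost_leaf : ∀ u, T.IsLeaf (lmost u)
  lmost_desc : ∀ u, T.Anc u (lmost u)
  lmost_min : ∀ u lf, T.IsLeaf lf → T.Anc u lf → idx (lmost u) ≤ idx lf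
  rmost_leaf : ∀ u, T.IsLeaf (rmost u)
  rmost_desc : ∀ u, T.Anc u (rmost u)
  rmost_max : ∀ u lf, T.IsLeaf lf → T.Anc u lf → idx lf ≤ idx (rmost u)
  contiguous : ∀ u lf lf' lf'', T.IsLeaf lf → T.IsLeaf lf' → T.IsLeaf lf'' →
    T.Anc u lf → T.Anc u lf' → idx lf ≤ idx lf'' → idx lf'' ≤ idx lf' → T.Anc u lf''

/-- The x-coordinate of a node: the index of its leftmost leaf descendant. -/
def PlanarCoords.x {N : ℕ} {T : RootedTree N} (P : PlanarCoords T) (u : Fin N) : ℕ :=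
  P.idx (P.lmost u)

/-- The closed neighbourhood `N[v]`. -/
def closedNbr {n : ℕ} (G : SimpleGraph (Fin n)) (v : Fin n) : Set (Fin n) :=
  insert v {w | G.Adj v w}

/-- `v` is a simple vertex: `N[v]` is a clique that can be ordered
`w_1, …, w_k` with `N[w_1] ⊆ N[w_2] ⊆ … ⊆ N[w_k]`. -/
def IsSimpleVx {n : ℕ} (G : SimpleGraph (Fin n)) (v : Fin n) : Prop :=
  G.IsClique (closedNbr G v) ∧
    ∃ l : List (Fin n), (∀ w, w ∈ l ↔ w ∈ closedNbr G v) ∧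
      l.Chain' fun a b => closedNbr G a ⊆ closedNbr G b

/-- The subgraph of `G` induced by the tail vertices `{v_i, …, v_n}`. -/
def tailGraph {n : ℕ} (G : SimpleGraph (Fin n)) (i : Fin n) : SimpleGraph (Fin n) where
  Adj a b := G.Adj a b ∧ i ≤ a ∧ i ≤ b
  symm := by constructor; intro a b h; exact ⟨h.1.symm, h.2.2, h.2.1⟩
  loopless := by constructor; intro a h; exact G.loopless.irrefl a h.1

/-- `G` is chordal: every cycle of length at least 4 has a chord, i.e. an edge
between two (necessarily non-consecutive) vertices of the cycle that is not an
edge of the cycle. -/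
def Chordal {V : Type*} (G : SimpleGraph V) : Prop :=
  ∀ (v : V) (c : G.Walk v v), c.IsCycle → 4 ≤ c.length →
    ∃ u w, u ∈ c.support ∧ w ∈ c.support ∧ G.Adj u w ∧ s(u, w) ∉ c.edges

/-- `S` is (the node set of) a subtree of the rooted tree `T`. -/
def IsSubtree {N : ℕ} (T : RootedTree N) (S : Set (Fin N)) : Prop :=
  S.Nonempty ∧ ∃ top ∈ S, (∀ u ∈ S, T.Anc top u) ∧ ∀ u ∈ S, u ≠ top → T.parent u ∈ S

/-! ### Auxiliary lemmas: rooted trees -/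

namespace RootedTree

variable {N : ℕ} (T : RootedTree N)

theorem depth_iterate (x : Fin N) (k : ℕ) :
    T.depth (T.parent^[k] x) = T.depth x - k := by
  induction k with
  | zero => simp
  | succ k ih =>
    rw [Function.iterate_succ_apply']
    by_cases h : T.parent^[k] x = T.root
    · rw [h] at ih
      rw [h, T.parent_root, T.depth_root]
      rw [T.depth_root] at ih
      omega
    · have h2 := T.depth_parent _ h
      omega

theorem eq_root_of_depth_eq_zero {x : Fin N} (h : T.depth x = 0) : x = T.root := by
  by_contra hx
  have := T.depth_parent x hx
  omega

theorem anc_eq_of_depth_le {y z : Fin N} {m : ℕ} (h : T.parent^[m] y = z)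
    (hd : T.depth y ≤ T.depth z) : y = z := by
  have hz := T.depth_iterate y m
  rw [h] at hz
  rcases Nat.eq_zero_or_pos m with rfl | hm
  · exact h
  · have h0 : T.depth y = 0 := by omega
    have hy := T.eq_root_of_depth_eq_zero h0
    subst hy
    rw [Function.iterate_fixed T.parent_root] at h
    exact h

theorem anc_refl (x : Fin N) : T.Anc x x := ⟨0, rfl⟩

theorem anc_root (x : Fin N) : T.Anc T.root x := by
  refine ⟨T.depth x, T.eq_root_of_depth_eq_zero ?_⟩
  rw [T.depth_iterate]
  omega

end RootedTree

/-- The key structural lemma about subtrees: if `x` lies in a parent-closed set `S`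
with top `t`, and `t₁` is an ancestor of `x` at least as deep as `t`, then `t₁ ∈ S`. -/
theorem mem_of_inter {N : ℕ} {T : RootedTree N} {S : Set (Fin N)} {t : Fin N}
    (ht : t ∈ S) (hcl : ∀ u ∈ S, u ≠ t → T.parent u ∈ S)
    {x t₁ : Fin N} (hx : x ∈ S) (h1 : T.Anc t₁ x)
    (hd : T.depth t ≤ T.depth t₁) : t₁ ∈ S := by
  obtain ⟨k1, hk1⟩ := h1
  have main : ∀ j, j ≤ k1 → T.parent^[j] x ∈ S ∨ t₁ ∈ S := by
    intro j
    induction j with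
    | zero => exact fun _ => Or.inl hx
    | succ j ih =>
      intro hj
      rcases ih (by omega) with hy | hdone
      · by_cases hyt : T.parent^[j] x = t
        · right
          have hm : T.parent^[k1 - j] t = t₁ := by
            rw [← hyt, ← Function.iterate_add_apply, Nat.sub_add_cancel (by omega)]
            exact hk1
          have := T.anc_eq_of_depth_le hm hd
          rwa [← this]
        · left
          rw [Function.iterate_succ_apply']
          exact hcl _ hy hyt
      · exact Or.inr hdone
  rcases main k1 le_rfl with h | h
  · rwa [hk1] at h
  · exact h

/-! ### Auxiliary lemmas: walks -/

open SimpleGraph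

theorem getVert_eq_support_getElem {V : Type*} {G : SimpleGraph V} {u v : V}
    (p : G.Walk u v) (i : ℕ) (h : i < p.support.length) :
    p.getVert i = p.support[i] := by
  induction p generalizing i with
  | nil =>
    simp only [Walk.support_nil, List.length_singleton] at h
    interval_cases i
    simp [Walk.getVert]
  | @cons a b c ha q ih =>
    cases i with
    | zero => simp [Walk.getVert_zero, Walk.support_cons]
    | succ i =>
      simp only [Walk.support_cons, List.length_cons] at h
      rw [Walk.getVert_cons_succ, ih i (by omega)]
      simp [Walk.support_cons]

theorem mem_edges_exists {V : Type*} {G : SimpleGraph V} {u v : V}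
    (p : G.Walk u v) {e : Sym2 V} (he : e ∈ p.edges) :
    ∃ i, i < p.length ∧ e = s(p.getVert i, p.getVert (i+1)) := by
  induction p with
  | nil => simp at he
  | @cons a b c ha q ih =>
    rw [Walk.edges_cons, List.mem_cons] at he
    rcases he with rfl | he
    · refine ⟨0, by simp, ?_⟩
      rw [Walk.getVert_zero]
      rw [show (q.cons ha).getVert 1 = q.getVert 0 from Walk.getVert_cons_succ q ha]
      rw [Walk.getVert_zero]
    · obtain ⟨i, hi, hei⟩ := ih he
      refine ⟨i+1, by simp only [Walk.length_cons]; omega, ?_⟩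
      rwa [Walk.getVert_cons_succ, Walk.getVert_cons_succ]

theorem cycle_getVert_inj {V : Type*} {G : SimpleGraph V} {v : V} {c : G.Walk v v}
    (hc : c.IsCycle) {i j : ℕ} (hi : i < c.length) (hj : j < c.length)
    (hij : c.getVert i = c.getVert j) : i = j := by
  have hlen : c.support.length = c.length + 1 := c.length_support
  have hl : c.support = v :: c.support.tail := c.support_eq_cons
  have htl : c.support.tail.length = c.length := by
    have := congrArg List.length hl
    rw [List.length_cons] at this
    omega
  have hnd := hc.support_nodup
  have htail : ∀ m, (hm : m < c.support.tail.length) →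
      c.getVert (m+1) = c.support.tail[m] := by
    intro m hm
    rw [getVert_eq_support_getElem c (m+1) (by omega), List.getElem_of_eq hl]
    simp
  have hvk : c.getVert c.length = c.getVert 0 := by
    rw [Walk.getVert_zero, c.getVert_length]
  rcases Nat.eq_zero_or_pos i with rfl | hi0 <;> rcases Nat.eq_zero_or_pos j with rfl | hj0
  · rfl
  · exfalso
    obtain ⟨j', rfl⟩ : ∃ j', j = j' + 1 := ⟨j - 1, by omega⟩
    obtain ⟨k', hk'⟩ : ∃ k', c.length = k' + 1 := ⟨c.length - 1, by omega⟩
    have h1 : c.support.tail[j']'(by omega) = c.support.tail[k']'(by omega) := by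
      rw [← htail j' (by omega), ← htail k' (by omega), ← hij, ← hk', hvk]
    have := (List.Nodup.getElem_inj_iff hnd).mp h1
    omega
  · exfalso
    obtain ⟨i', rfl⟩ : ∃ i', i = i' + 1 := ⟨i - 1, by omega⟩
    obtain ⟨k', hk'⟩ : ∃ k', c.length = k' + 1 := ⟨c.length - 1, by omega⟩
    have h1 : c.support.tail[i']'(by omega) = c.support.tail[k']'(by omega) := by
      rw [← htail i' (by omega), ← htail k' (by omega), hij, ← hk', hvk]
    have := (List.Nodup.getElem_inj_iff hnd).mp h1
    omega
  · obtain ⟨i', rfl⟩ : ∃ i', i = i' + 1 := ⟨i - 1, by omega⟩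
    obtain ⟨j', rfl⟩ : ∃ j', j = j' + 1 := ⟨j - 1, by omega⟩
    have h1 : c.support.tail[i']'(by omega) = c.support.tail[j']'(by omega) := by
      rw [← htail i' (by omega), ← htail j' (by omega), hij]
    have := (List.Nodup.getElem_inj_iff hnd).mp h1
    omega

/-! ### Forward direction: a subtree representation forces chordality -/

theorem chordal_of_rep {n N : ℕ} {G : SimpleGraph (Fin n)} (T : RootedTree N)
    (S : Fin n → Set (Fin N)) (hsub : ∀ v, IsSubtree T (S v))
    (hrep : ∀ u w, u ≠ w → (G.Adj u w ↔ (S u ∩ S w).Nonempty)) : Chordal G := by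
  classical
  have hsub' : ∀ v, ∃ t, t ∈ S v ∧ (∀ u ∈ S v, T.Anc t u) ∧
      ∀ u ∈ S v, u ≠ t → T.parent u ∈ S v := by
    intro v; obtain ⟨_, t, ht, h1, h2⟩ := hsub v; exact ⟨t, ht, h1, h2⟩
  choose top htmem htanc htcl using hsub'
  have key : ∀ a b : Fin n, G.Adj a b → T.depth (top b) ≤ T.depth (top a) →
      top a ∈ S b := by
    intro a b hab hd
    obtain ⟨x, hxa, hxb⟩ := (hrep a b hab.ne).mp hab
    exact mem_of_inter (htmem b) (htcl b) hxb (htanc a x hxa) hd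
  intro v c hc hlen
  set k := c.length with hk
  have hkpos : 0 < k := by omega
  set w : ℕ → Fin n := fun i => c.getVert (i % k) with hw
  have hvk : c.getVert k = c.getVert 0 := by
    rw [Walk.getVert_zero, hk, c.getVert_length]
  have hwadj : ∀ i, G.Adj (w i) (w (i+1)) := by
    intro i
    have h1 : (i+1) % k = (i % k + 1) % k := by
      conv_lhs => rw [Nat.add_mod]
      rw [Nat.mod_eq_of_lt (show 1 < k by omega)]
    have hik : i % k < k := Nat.mod_lt _ hkpos
    by_cases h2 : i % k + 1 < k
    · have h3 : (i % k + 1) % k = i % k + 1 := Nat.mod_eq_of_lt h2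
      simp only [hw]
      rw [h1, h3]
      exact c.adj_getVert_succ hik
    · have h3 : i % k + 1 = k := by omega
      have h4 : (i % k + 1) % k = 0 := by rw [h3, Nat.mod_self]
      simp only [hw]
      rw [h1, h4]
      have h5 := c.adj_getVert_succ (show i % k < c.length from hik)
      rwa [h3, hvk] at h5
  have hwinj : ∀ i j, w i = w j → i % k = j % k := fun i j hij =>
    cycle_getVert_inj hc (Nat.mod_lt _ hkpos) (Nat.mod_lt _ hkpos) hij
  have hwk : ∀ i, w (i + k) = w i := fun i => by
    simp only [hw, Nat.add_mod_right]
  obtain ⟨j0, hj0mem, hj0max⟩ := Finset.exists_max_image (Finset.range k)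
    (fun i => T.depth (top (w i))) ⟨0, Finset.mem_range.mpr hkpos⟩
  set j := j0 + k with hj
  have hmax : ∀ i, T.depth (top (w i)) ≤ T.depth (top (w j)) := by
    intro i
    have h1 : w i = w (i % k) := by
      simp only [hw, Nat.mod_mod_of_dvd _ dvd_rfl]
    have h2 : w j = w j0 := hwk j0
    rw [h1, h2]
    exact hj0max _ (Finset.mem_range.mpr (Nat.mod_lt _ hkpos))
  have hadj1 : G.Adj (w (j-1)) (w j) := by
    have h := hwadj (j-1)
    rwa [show j - 1 + 1 = j from by omega] at h
  have hadj2 : G.Adj (w j) (w (j+1)) := hwadj j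
  have hin1 : top (w j) ∈ S (w (j-1)) := key _ _ hadj1.symm (hmax _)
  have hin2 : top (w j) ∈ S (w (j+1)) := key _ _ hadj2 (hmax _)
  have hne : w (j-1) ≠ w (j+1) := by
    intro h
    have h2 : Nat.ModEq k (j-1) (j+1) := hwinj _ _ h
    have hdvd : k ∣ (j+1) - (j-1) := (Nat.modEq_iff_dvd' (by omega)).mp h2
    rw [show j + 1 - (j-1) = 2 from by omega] at hdvd
    have := Nat.le_of_dvd (by norm_num) hdvd
    omega
  have hGadj : G.Adj (w (j-1)) (w (j+1)) := (hrep _ _ hne).mpr ⟨top (w j), hin1, hin2⟩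
  have hmemsup : ∀ i, w i ∈ c.support := by
    intro i
    have h1 : i % k < c.support.length := by
      rw [c.length_support]
      have := Nat.mod_lt i hkpos
      omega
    rw [hw]
    simp only
    rw [getVert_eq_support_getElem c _ h1]
    exact List.getElem_mem h1
  have hedge : s(w (j-1), w (j+1)) ∉ c.edges := by
    intro hmem
    obtain ⟨i, hik, hei⟩ := mem_edges_exists c hmem
    have hwi : c.getVert i = w i := by
      simp only [hw]; rw [Nat.mod_eq_of_lt (show i < k from hik)]
    have hwi1 : c.getVert (i+1) = w (i+1) := by
      by_cases h : i + 1 < k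
      · simp only [hw, Nat.mod_eq_of_lt h]
      · have h3 : i + 1 = k := by omega
        simp only [hw, h3, Nat.mod_self]
        exact hvk
    rw [hwi, hwi1, Sym2.eq_iff] at hei
    rcases hei with ⟨h1, h2⟩ | ⟨h1, h2⟩
    · have e1 : Nat.ModEq k (j-1) i := hwinj _ _ h1
      have e2 : Nat.ModEq k (j+1) (i+1) := hwinj _ _ h2
      have e3 : Nat.ModEq k j (i+1) := by
        have := e1.add_right 1
        rwa [show j - 1 + 1 = j from by omega] at this
      have e4 : Nat.ModEq k j (j+1) := e3.trans e2.symm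
      have hdvd : k ∣ (j+1) - j := (Nat.modEq_iff_dvd' (by omega)).mp e4
      rw [show j + 1 - j = 1 from by omega] at hdvd
      have := Nat.le_of_dvd (by norm_num) hdvd
      omega
    · have e1 : Nat.ModEq k (j-1) (i+1) := hwinj _ _ h1
      have e2 : Nat.ModEq k (j+1) i := hwinj _ _ h2
      have e3 : Nat.ModEq k (j+2) (i+1) := e2.add_right 1
      have e4 : Nat.ModEq k (j-1) (j+2) := e1.trans e3.symm
      have hdvd : k ∣ (j+2) - (j-1) := (Nat.modEq_iff_dvd' (by omega)).mp e4
      rw [show j + 2 - (j-1) = 3 from by omega] at hdvd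
      have := Nat.le_of_dvd (by norm_num) hdvd
      omega
  exact ⟨w (j-1), w (j+1), hmemsup _, hmemsup _, hGadj, hedge⟩
/-! ### Simplicial vertices, chordality transfer, and Dirac's lemma -/

/-- `v` is a simplicial vertex: its neighbourhood is a clique. -/
def Simplicial {V : Type*} (G : SimpleGraph V) (v : V) : Prop :=
  ∀ a b, G.Adj v a → G.Adj v b → a ≠ b → G.Adj a b

theorem chordal_of_embedding {V W : Type*} {G : SimpleGraph V} {H : SimpleGraph W}
    (f : G ↪g H) (hH : Chordal H) : Chordal G := by
  intro v c hc hlen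
  have hinj : Function.Injective (f.toHom : V → W) := f.injective
  obtain ⟨u', w', hu', hw', hadj', hne'⟩ := hH (f v) (c.map f.toHom)
    (hc.map hinj) (by rwa [Walk.length_map])
  rw [Walk.support_map, List.mem_map] at hu' hw'
  obtain ⟨u, hu, rfl⟩ := hu'
  obtain ⟨w, hw, rfl⟩ := hw'
  refine ⟨u, w, hu, hw, f.map_adj_iff.mp hadj', ?_⟩
  intro hmem
  apply hne'
  rw [Walk.edges_map, List.mem_map]
  exact ⟨s(u, w), hmem, by simp⟩

/-- The graph `G` with all vertices of `s` removed (isolated). -/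
def avoid {V : Type*} (G : SimpleGraph V) (s : Set V) : SimpleGraph V where
  Adj a b := G.Adj a b ∧ a ∉ s ∧ b ∉ s
  symm := by constructor; intro a b h; exact ⟨h.1.symm, h.2.2, h.2.1⟩
  loopless := by constructor; intro a h; exact G.loopless.irrefl a h.1

theorem avoid_support_not_mem {V : Type*} {G : SimpleGraph V} {s : Set V} {a b : V}
    (p : (avoid G s).Walk a b) (ha : a ∉ s) : ∀ x ∈ p.support, x ∉ s := by
  induction p with
  | nil =>
    intro x hx
    rw [Walk.support_nil, List.mem_singleton] at hx
    subst hx; exact ha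
  | cons h q ih =>
    intro x hx
    rw [Walk.support_cons, List.mem_cons] at hx
    rcases hx with rfl | hx
    · exact ha
    · exact ih h.2.2 x hx

theorem reachable_avoid {V : Type*} {G : SimpleGraph V} {s s' : Set V} {a b : V}
    (p : (avoid G s').Walk a b) (h : ∀ x ∈ p.support, x ∉ s) :
    (avoid G s).Reachable a b := by
  induction p with
  | nil => exact SimpleGraph.Reachable.refl _
  | @cons a c b' had q ih =>
    have h1 : (avoid G s).Adj a c :=
      ⟨had.1, h a (by rw [Walk.support_cons]; exact List.mem_cons_self),
        h c (by rw [Walk.support_cons]; exact List.mem_cons_of_mem _ q.start_mem_support)⟩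
    exact h1.reachable.trans
      (ih fun x hx => h x (by rw [Walk.support_cons]; exact List.mem_cons_of_mem _ hx))

/-- From a walk through `x`, extract a neighbour of `x` reachable from the start
by a walk avoiding `x`. -/
theorem neighbor_before {V : Type*} {H : SimpleGraph V} {c d : V} (p : H.Walk c d) (x : V) :
    x ∈ p.support → c ≠ x →
      ∃ y, (∃ q : H.Walk c y, x ∉ q.support) ∧ H.Adj y x := by
  induction p with
  | nil =>
    intro hx hcx
    rw [Walk.support_nil, List.mem_singleton] at hx
    exact absurd hx.symm hcx
  | @cons c e d h q ih =>
    intro hx hcx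
    rw [Walk.support_cons, List.mem_cons] at hx
    have hx' : x ∈ q.support := by
      rcases hx with rfl | hx
      · exact absurd rfl hcx
      · exact hx
    by_cases hex : e = x
    · refine ⟨c, ⟨Walk.nil, ?_⟩, hex ▸ h⟩
      rw [Walk.support_nil, List.mem_singleton]
      exact fun hh => hcx hh.symm
    · obtain ⟨y, ⟨r, hr⟩, hyx⟩ := ih hx' (fun hh => hex hh)
      refine ⟨y, ⟨Walk.cons h r, ?_⟩, hyx⟩
      rw [Walk.support_cons, List.mem_cons]
      rintro (rfl | hmem)
      · exact hcx rfl
      · exact hr hmem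

/-- Helper: drop an initial segment of a walk at a given support vertex. -/
theorem exists_tail_walk {V : Type*} {H : SimpleGraph V} {z y : V} (q : H.Walk z y) :
    ∀ w, w ∈ q.support → ∃ r : H.Walk w y, r.length ≤ q.length ∧
      (r.length = q.length → w = z) ∧ ∀ e ∈ r.edges, e ∈ q.edges := by
  induction q with
  | nil =>
    intro w hw
    rw [Walk.support_nil, List.mem_singleton] at hw
    subst hw
    exact ⟨Walk.nil, le_rfl, fun _ => rfl, by simp⟩
  | @cons z c y h q ih =>
    intro w hw
    rw [Walk.support_cons, List.mem_cons] at hw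
    by_cases hwz : w = z
    · subst hwz
      exact ⟨Walk.cons h q, le_rfl, fun _ => rfl, fun e he => he⟩
    · have hw' : w ∈ q.support := by tauto
      obtain ⟨r, h1, _, h3⟩ := ih w hw'
      refine ⟨r, by rw [Walk.length_cons]; omega, ?_, ?_⟩
      · intro heq
        exfalso
        rw [Walk.length_cons] at heq
        omega
      · intro e he
        rw [Walk.edges_cons]
        exact List.mem_cons_of_mem _ (h3 e he)

/-- In a minimum-length walk, any adjacency between support vertices must be
an edge of the walk. -/
theorem edge_of_adj_support {V : Type*} {H : SimpleGraph V} {x y : V} (p : H.Walk x y) :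
    (∀ q : H.Walk x y, p.length ≤ q.length) → ∀ u w, u ∈ p.support → w ∈ p.support →
      H.Adj u w → s(u, w) ∈ p.edges := by
  induction p with
  | nil =>
    intro _ u w hu hw hadj
    rw [Walk.support_nil, List.mem_singleton] at hu hw
    subst hu; subst hw
    exact absurd rfl hadj.ne
  | @cons x z y h q ih =>
    intro hmin u w hu hw hadj
    rw [Walk.support_cons, List.mem_cons] at hu hw
    have hminq : ∀ r : H.Walk z y, q.length ≤ r.length := by
      intro r
      have := hmin (Walk.cons h r)
      rw [Walk.length_cons, Walk.length_cons] at this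
      omega
    have main : ∀ w', w' ∈ q.support → H.Adj x w' → s(x, w') ∈ (Walk.cons h q).edges := by
      intro w' hw' hadj'
      by_cases hwz : w' = z
      · subst hwz
        rw [Walk.edges_cons]
        exact List.mem_cons_self
      · obtain ⟨r, h1, h2, _⟩ := exists_tail_walk q w' hw'
        exfalso
        have := hmin (Walk.cons hadj' r)
        rw [Walk.length_cons, Walk.length_cons] at this
        exact hwz (h2 (by omega))
    rcases hu with rfl | hu' <;> rcases hw with rfl | hw'
    · exact absurd rfl hadj.ne
    · exact main w hw' hadj
    · rw [Sym2.eq_swap]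
      exact main u hu' hadj.symm
    · rw [Walk.edges_cons]
      exact List.mem_cons_of_mem _ (ih hminq u w hu' hw' hadj)
theorem reachable_avoid_of_walk {V : Type*} {G : SimpleGraph V} {s : Set V} {a b : V}
    (p : G.Walk a b) (h : ∀ x ∈ p.support, x ∉ s) : (avoid G s).Reachable a b := by
  induction p with
  | nil => exact SimpleGraph.Reachable.refl _
  | @cons a c b' had q ih =>
    have h1 : (avoid G s).Adj a c :=
      ⟨had, h a (by rw [Walk.support_cons]; exact List.mem_cons_self),
        h c (by rw [Walk.support_cons]; exact List.mem_cons_of_mem _ q.start_mem_support)⟩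
    exact h1.reachable.trans
      (ih fun z hz => h z (by rw [Walk.support_cons]; exact List.mem_cons_of_mem _ hz))

/-- Two distinct vertices, each with neighbours in two internally connected sets `A`, `B`
that are mutually disconnected, must be adjacent in a chordal graph. -/
theorem adj_of_two_sides {V : Type*} {G : SimpleGraph V} (hch : Chordal G)
    {A B : Set V} {x y : V} (hxy : x ≠ y)
    (hAB : ∀ z, z ∈ A → z ∈ B → False)
    (hABadj : ∀ u ∈ A, ∀ w ∈ B, ¬ G.Adj u w)
    (hconnA : ∀ u ∈ A, ∀ w ∈ A, ∃ p : G.Walk u w, ∀ z ∈ p.support, z ∈ A)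
    (hconnB : ∀ u ∈ B, ∀ w ∈ B, ∃ p : G.Walk u w, ∀ z ∈ p.support, z ∈ B)
    (hax : ∃ t ∈ A, G.Adj x t) (hay : ∃ t ∈ A, G.Adj y t)
    (hbx : ∃ t ∈ B, G.Adj x t) (hby : ∃ t ∈ B, G.Adj y t) :
    G.Adj x y := by
  classical
  by_contra hnxy
  obtain ⟨ax, haxA, haxadj⟩ := hax
  obtain ⟨ay, hayA, hayadj⟩ := hay
  obtain ⟨bx, hbxB, hbxadj⟩ := hbx
  obtain ⟨by', hbyB, hbyadj⟩ := hby
  set VA : Set V := A ∪ {x, y} with hVA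
  set VB : Set V := B ∪ {x, y} with hVB
  have hVAmem : ∀ z, z ∈ VA ↔ z ∈ A ∨ z = x ∨ z = y := by
    intro z
    simp only [hVA, Set.mem_union, Set.mem_insert_iff, Set.mem_singleton_iff]
  have hVBmem : ∀ z, z ∈ VB ↔ z ∈ B ∨ z = x ∨ z = y := by
    intro z
    simp only [hVB, Set.mem_union, Set.mem_insert_iff, Set.mem_singleton_iff]
  have hxVA : x ∉ VAᶜ := by rw [Set.notMem_compl_iff, hVAmem]; tauto
  have hyVA : y ∉ VAᶜ := by rw [Set.notMem_compl_iff, hVAmem]; tauto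
  have hxVB : x ∉ VBᶜ := by rw [Set.notMem_compl_iff, hVBmem]; tauto
  have hyVB : y ∉ VBᶜ := by rw [Set.notMem_compl_iff, hVBmem]; tauto
  have hAVA : ∀ z ∈ A, z ∉ VAᶜ := by
    intro z hz; rw [Set.notMem_compl_iff, hVAmem]; tauto
  have hBVB : ∀ z ∈ B, z ∉ VBᶜ := by
    intro z hz; rw [Set.notMem_compl_iff, hVBmem]; tauto
  set HA : SimpleGraph V := avoid G VAᶜ with hHA
  set HB : SimpleGraph V := avoid G VBᶜ with hHB
  -- x and y are connected inside VA
  have hreachA : HA.Reachable x y := by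
    obtain ⟨p, hp⟩ := hconnA ax haxA ay hayA
    have h1 : HA.Adj x ax := ⟨haxadj, hxVA, hAVA _ haxA⟩
    have h2 : HA.Adj ay y := ⟨hayadj.symm, hAVA _ hayA, hyVA⟩
    exact (h1.reachable.trans (reachable_avoid_of_walk p fun z hz => hAVA _ (hp z hz))).trans
      h2.reachable
  have hreachB : HB.Reachable x y := by
    obtain ⟨p, hp⟩ := hconnB bx hbxB by' hbyB
    have h1 : HB.Adj x bx := ⟨hbxadj, hxVB, hBVB _ hbxB⟩
    have h2 : HB.Adj by' y := ⟨hbyadj.symm, hBVB _ hbyB, hyVB⟩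
    exact (h1.reachable.trans (reachable_avoid_of_walk p fun z hz => hBVB _ (hp z hz))).trans
      h2.reachable
  -- minimal paths
  obtain ⟨p0, hp0⟩ := hreachA.exists_walk_length_eq_dist
  obtain ⟨p1, hp1⟩ := hreachB.exists_walk_length_eq_dist
  set pA := p0.bypass with hpAdef
  set pB := p1.bypass with hpBdef
  have hpApath : pA.IsPath := p0.bypass_isPath
  have hpBpath : pB.IsPath := p1.bypass_isPath
  have hpAlen : pA.length ≤ HA.dist x y := by
    rw [← hp0]; exact Walk.length_bypass_le p0
  have hpBlen : pB.length ≤ HB.dist x y := by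
    rw [← hp1]; exact Walk.length_bypass_le p1
  have hpAmin : ∀ q : HA.Walk x y, pA.length ≤ q.length := by
    intro q
    have h1 := SimpleGraph.dist_le q
    omega
  have hpBmin : ∀ q : HB.Walk x y, pB.length ≤ q.length := by
    intro q
    have h1 := SimpleGraph.dist_le q
    omega
  -- lengths at least 2
  have hHAle : HA ≤ G := fun u w h => h.1
  have hHBle : HB ≤ G := fun u w h => h.1
  have hlen2 : ∀ (H : SimpleGraph V) (p : H.Walk x y), (H ≤ G) → 2 ≤ p.length := by
    intro H p hle
    by_contra hcon
    push_neg at hcon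
    interval_cases hl : p.length
    · exact hxy (Walk.eq_of_length_eq_zero hl)
    · have := p.adj_getVert_succ (by omega : 0 < p.length)
      rw [Walk.getVert_zero, p.getVert_of_length_le (by omega : p.length ≤ 0 + 1)] at this
      exact hnxy (hle this)
  have hApA2 : 2 ≤ pA.length := hlen2 HA pA hHAle
  have hBpB2 : 2 ≤ pB.length := hlen2 HB pB hHBle
  -- supports
  have hsupVA : ∀ z ∈ pA.support, z ∈ VA := by
    intro z hz
    exact Set.notMem_compl_iff.mp (avoid_support_not_mem pA hxVA z hz)
  have hsupVB : ∀ z ∈ pB.support, z ∈ VB := by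
    intro z hz
    exact Set.notMem_compl_iff.mp (avoid_support_not_mem pB hxVB z hz)
  have hz_xy : ∀ z, z ∈ pA.support → z ∈ pB.support → z = x ∨ z = y := by
    intro z h1 h2
    have hA1 := (hVAmem z).mp (hsupVA z h1)
    have hB1 := (hVBmem z).mp (hsupVB z h2)
    rcases hA1 with h | h | h
    · rcases hB1 with h' | h' | h'
      · exact absurd h' (fun hh => hAB z h hh)
      · exact Or.inl h'
      · exact Or.inr h'
    · exact Or.inl h
    · exact Or.inr h
  -- transfer to G
  have hedgesA : ∀ e ∈ pA.edges, e ∈ G.edgeSet := by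
    intro e he
    have := pA.edges_subset_edgeSet he
    exact SimpleGraph.edgeSet_mono hHAle this
  have hedgesB : ∀ e ∈ pB.edges, e ∈ G.edgeSet := by
    intro e he
    have := pB.edges_subset_edgeSet he
    exact SimpleGraph.edgeSet_mono hHBle this
  set qA : G.Walk x y := pA.transfer G hedgesA with hqAdef
  set qB : G.Walk x y := pB.transfer G hedgesB with hqBdef
  have hsupA : qA.support = pA.support := Walk.support_transfer _ _
  have hsupB : qB.support = pB.support := Walk.support_transfer _ _
  have hedA : qA.edges = pA.edges := Walk.edges_transfer _ _
  have hedB : qB.edges = pB.edges := Walk.edges_transfer _ _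
  have hlenA : qA.length = pA.length := Walk.length_transfer _ _
  have hlenB : qB.length = pB.length := Walk.length_transfer _ _
  set c : G.Walk x x := qA.append qB.reverse with hcdef
  have hclen : 4 ≤ c.length := by
    rw [hcdef, Walk.length_append, Walk.length_reverse, hlenA, hlenB]
    omega
  -- no shared edges
  have hshared : ∀ e, e ∈ pA.edges → e ∈ pB.edges → False := by
    intro e
    induction e using Sym2.inductionOn with
    | hf z1 z2 =>
      intro he1 he2
      have hz1A := pA.fst_mem_support_of_mem_edges he1
      have hz2A := pA.snd_mem_support_of_mem_edges he1
      have hz1B := pB.fst_mem_support_of_mem_edges he2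
      have hz2B := pB.snd_mem_support_of_mem_edges he2
      have hne : z1 ≠ z2 := (pA.adj_of_mem_edges he1).ne
      have hadj : G.Adj z1 z2 := (pA.adj_of_mem_edges he1).1
      rcases hz_xy z1 hz1A hz1B with rfl | rfl <;>
        rcases hz_xy z2 hz2A hz2B with rfl | rfl
      · exact hne rfl
      · exact hnxy hadj
      · exact hnxy hadj.symm
      · exact hne rfl
  -- head-不tail facts
  have hxA : x ∉ pA.support.tail := by
    have h1 := hpApath.support_nodup
    rw [pA.support_eq_cons] at h1
    exact (List.nodup_cons.mp h1).1
  have hyB : y ∉ qB.reverse.support.tail := by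
    have h1 : qB.reverse.support.Nodup := by
      rw [Walk.support_reverse, List.nodup_reverse, hsupB]
      exact hpBpath.support_nodup
    rw [qB.reverse.support_eq_cons] at h1
    exact (List.nodup_cons.mp h1).1
  have hrevmem : ∀ z, z ∈ qB.reverse.support → z ∈ pB.support := by
    intro z hz
    rw [Walk.support_reverse, List.mem_reverse, hsupB] at hz
    exact hz
  -- the cycle
  have hcyc : c.IsCycle := by
    constructor
    case support_nodup =>
      have htc : c.support.tail = pA.support.tail ++ qB.reverse.support.tail := by
        have h0 : qA.support = x :: pA.support.tail := by
          rw [← hsupA]; exact qA.support_eq_cons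
        rw [hcdef, Walk.support_append, h0, List.cons_append, List.tail_cons]
      rw [htc]
      apply List.Nodup.append
      · exact hpApath.support_nodup.sublist (List.tail_sublist _)
      · have h1 : qB.reverse.support.Nodup := by
          rw [Walk.support_reverse, List.nodup_reverse, hsupB]
          exact hpBpath.support_nodup
        exact h1.sublist (List.tail_sublist _)
      · intro z hz1 hz2
        have hzA : z ∈ pA.support := List.mem_of_mem_tail hz1
        have hzB : z ∈ pB.support := hrevmem z (List.mem_of_mem_tail hz2)
        rcases hz_xy z hzA hzB with rfl | rfl
        · exact hxA hz1
        · exact hyB hz2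
    constructor
    case ne_nil =>
      intro hn
      have : c.length = 0 := by rw [hn]; rfl
      omega
    case isCircuit.isTrail =>
      constructor
      rw [hcdef, Walk.edges_append, Walk.edges_reverse, hedA, hedB]
      apply List.Nodup.append
      · exact hpApath.isTrail.edges_nodup
      · exact List.nodup_reverse.mpr hpBpath.isTrail.edges_nodup
      · intro e he1 he2
        rw [List.mem_reverse] at he2
        exact hshared e he1 he2
  -- apply chordality
  obtain ⟨u, w, hus, hws, hadjuw, hnedge⟩ := hch x c hcyc hclen
  have hedgeA : ∀ e ∈ pA.edges, e ∈ c.edges := by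
    intro e he
    rw [hcdef, Walk.edges_append, List.mem_append]
    left; rwa [hedA]
  have hedgeB : ∀ e ∈ pB.edges, e ∈ c.edges := by
    intro e he
    rw [hcdef, Walk.edges_append, List.mem_append]
    right; rw [Walk.edges_reverse, List.mem_reverse]; rwa [hedB]
  have hsupmem : ∀ z ∈ c.support, z ∈ pA.support ∨ z ∈ pB.support := by
    intro z hz
    rw [hcdef, Walk.support_append, List.mem_append] at hz
    rcases hz with hz | hz
    · left; rwa [hsupA] at hz
    · right; exact hrevmem z (List.mem_of_mem_tail hz)
  -- case analysis on the chord
  have caseAA : ∀ u' w', u' ∈ pA.support → w' ∈ pA.support → G.Adj u' w' →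
      s(u', w') ∉ c.edges → False := by
    intro u' w' hu hw hadj hne
    have hmemA : HA.Adj u' w' :=
      ⟨hadj, Set.notMem_compl_iff.mpr (hsupVA _ hu), Set.notMem_compl_iff.mpr (hsupVA _ hw)⟩
    exact hne (hedgeA _ (edge_of_adj_support pA hpAmin u' w' hu hw hmemA))
  have caseBB : ∀ u' w', u' ∈ pB.support → w' ∈ pB.support → G.Adj u' w' →
      s(u', w') ∉ c.edges → False := by
    intro u' w' hu hw hadj hne
    have hmemB : HB.Adj u' w' :=
      ⟨hadj, Set.notMem_compl_iff.mpr (hsupVB _ hu), Set.notMem_compl_iff.mpr (hsupVB _ hw)⟩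
    exact hne (hedgeB _ (edge_of_adj_support pB hpBmin u' w' hu hw hmemB))
  have caseAB : ∀ u' w', u' ∈ pA.support → w' ∈ pB.support → G.Adj u' w' →
      s(u', w') ∉ c.edges → False := by
    intro u' w' hu hw hadj hne
    rcases (hVAmem u').mp (hsupVA _ hu) with huA | rfl | rfl
    · rcases (hVBmem w').mp (hsupVB _ hw) with hwB | rfl | rfl
      · exact hABadj u' huA w' hwB hadj
      · exact caseAA u' w' hu pA.start_mem_support hadj hne
      · exact caseAA u' w' hu pA.end_mem_support hadj hne
    · exact caseBB u' w' pB.start_mem_support hw hadj hne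
    · exact caseBB u' w' pB.end_mem_support hw hadj hne
  rcases hsupmem u hus with h1 | h1 <;> rcases hsupmem w hws with h2 | h2
  · exact caseAA u w h1 h2 hadjuw hnedge
  · exact caseAB u w h1 h2 hadjuw hnedge
  · exact caseAB w u h2 h1 hadjuw.symm (by rwa [Sym2.eq_swap] at hnedge)
  · exact caseBB u w h1 h2 hadjuw hnedge
theorem simplicial_from_side {V : Type} {G : SimpleGraph V} {A SS : Set V}
    (hnbrs : ∀ v ∈ A, ∀ z, G.Adj v z → z ∈ A ∪ SS)
    (hSclique : ∀ x ∈ SS, ∀ y ∈ SS, x ≠ y → G.Adj x y)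
    (hres : (∀ a b : ↥(A ∪ SS), a ≠ b → (G.induce (A ∪ SS)).Adj a b) ∨
      (∃ v w : ↥(A ∪ SS), v ≠ w ∧ ¬(G.induce (A ∪ SS)).Adj v w ∧
        Simplicial (G.induce (A ∪ SS)) v ∧ Simplicial (G.induce (A ∪ SS)) w))
    {a0 : V} (ha0 : a0 ∈ A) :
    ∃ v ∈ A, Simplicial G v := by
  have hadj_ind : ∀ (u v : ↥(A ∪ SS)), (G.induce (A ∪ SS)).Adj u v ↔ G.Adj ↑u ↑v := by
    intro u v
    simp [SimpleGraph.comap_adj]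
  have lift : ∀ v : ↥(A ∪ SS), ↑v ∈ A → Simplicial (G.induce (A ∪ SS)) v →
      Simplicial G ↑v := by
    intro v hvA hs z1 z2 h1 h2 hne
    have hz1 : z1 ∈ A ∪ SS := hnbrs _ hvA z1 h1
    have hz2 : z2 ∈ A ∪ SS := hnbrs _ hvA z2 h2
    have h := hs ⟨z1, hz1⟩ ⟨z2, hz2⟩ ((hadj_ind _ _).mpr h1) ((hadj_ind _ _).mpr h2)
      (fun hh => hne (congrArg Subtype.val hh))
    exact (hadj_ind _ _).mp h
  rcases hres with hcomp | ⟨v, w, hvw, hnadj, hv, hw⟩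
  · refine ⟨a0, ha0, lift ⟨a0, Set.mem_union_left _ ha0⟩ ha0 ?_⟩
    intro z1 z2 _ _ hne
    exact hcomp z1 z2 hne
  · have hvw' : ↑v ∈ A ∨ ↑w ∈ A := by
      by_contra hcon
      push_neg at hcon
      have hv' : ↑v ∈ SS := by
        have := v.2; rw [Set.mem_union] at this; exact this.resolve_left hcon.1
      have hw' : ↑w ∈ SS := by
        have := w.2; rw [Set.mem_union] at this; exact this.resolve_left hcon.2
      exact hnadj ((hadj_ind _ _).mpr (hSclique _ hv' _ hw' fun h => hvw (Subtype.ext h)))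
    rcases hvw' with h | h
    · exact ⟨v, h, lift v h hv⟩
    · exact ⟨w, h, lift w h hw⟩

theorem dirac_aux : ∀ (m : ℕ) {V : Type} [Fintype V] (G : SimpleGraph V),
    Nat.card V ≤ m → Chordal G →
    (∀ a b : V, a ≠ b → G.Adj a b) ∨
      ∃ v w, v ≠ w ∧ ¬G.Adj v w ∧ Simplicial G v ∧ Simplicial G w := by
  intro m
  induction m with
  | zero =>
    intro V _ G hcard _
    left
    intro a b hab
    haveI : Nonempty V := ⟨a⟩
    have := Nat.card_pos (α := V)
    omega
  | succ m IH =>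
    intro V _ G hcard hch
    classical
    by_cases hcomp : ∀ a b : V, a ≠ b → G.Adj a b
    · exact Or.inl hcomp
    right
    push_neg at hcomp
    obtain ⟨a, b, hab, hnadj⟩ := hcomp
    have hsep0 : a ∉ (Finset.univ \ {a, b} : Finset V) ∧
        b ∉ (Finset.univ \ {a, b} : Finset V) ∧
        ¬(avoid G ↑(Finset.univ \ {a, b} : Finset V)).Reachable a b := by
      refine ⟨by simp, by simp, ?_⟩
      rintro ⟨p⟩
      cases p with
      | nil => exact hab rfl
      | @cons _ e _ h q =>
        have he : e ∉ (↑(Finset.univ \ ({a, b} : Finset V)) : Set V) := h.2.2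
        have he' : e = a ∨ e = b := by simp at he; tauto
        rcases he' with rfl | rfl
        · exact G.loopless.irrefl e h.1
        · exact hnadj h.1
    set SepP : Finset V → Prop :=
      fun s => a ∉ s ∧ b ∉ s ∧ ¬(avoid G ↑s).Reachable a b with hSepP
    obtain ⟨S, hSmem, hSmin⟩ := Finset.exists_min_image (Finset.univ.filter SepP)
      Finset.card ⟨_, Finset.mem_filter.mpr ⟨Finset.mem_univ _, hsep0⟩⟩
    obtain ⟨haS, hbS, hnreach⟩ := (Finset.mem_filter.mp hSmem).2
    have hSmin' : ∀ s : Finset V, SepP s → S.card ≤ s.card := fun s hs =>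
      hSmin s (Finset.mem_filter.mpr ⟨Finset.mem_univ _, hs⟩)
    set A : Set V := {z | (avoid G (↑S : Set V)).Reachable a z} with hA
    set B : Set V := {z | (avoid G (↑S : Set V)).Reachable b z} with hB
    have haA : a ∈ A := SimpleGraph.Reachable.refl _
    have hbB : b ∈ B := SimpleGraph.Reachable.refl _
    have haSc : a ∉ (↑S : Set V) := by simpa using haS
    have hbSc : b ∉ (↑S : Set V) := by simpa using hbS
    have hAS : ∀ z ∈ A, z ∉ (↑S : Set V) := by
      intro z hz
      obtain ⟨p⟩ := hz
      exact avoid_support_not_mem p haSc z p.end_mem_support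
    have hBS : ∀ z ∈ B, z ∉ (↑S : Set V) := by
      intro z hz
      obtain ⟨p⟩ := hz
      exact avoid_support_not_mem p hbSc z p.end_mem_support
    have hAB : ∀ z, z ∈ A → z ∈ B → False := fun z h1 h2 => hnreach (h1.trans h2.symm)
    have hAext : ∀ u ∈ A, ∀ z, G.Adj u z → z ∉ (↑S : Set V) → z ∈ A := by
      intro u hu z hadj hz
      exact hu.trans (SimpleGraph.Adj.reachable ⟨hadj, hAS u hu, hz⟩)
    have hBext : ∀ u ∈ B, ∀ z, G.Adj u z → z ∉ (↑S : Set V) → z ∈ B := by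
      intro u hu z hadj hz
      exact hu.trans (SimpleGraph.Adj.reachable ⟨hadj, hBS u hu, hz⟩)
    have havle : avoid G (↑S : Set V) ≤ G := fun _ _ h => h.1
    have hnbr : ∀ x ∈ S, (∃ t ∈ A, G.Adj x t) ∧ (∃ t ∈ B, G.Adj x t) := by
      intro x hxS
      by_contra hcon
      have hxSc : (x : V) ∈ (↑S : Set V) := by simpa using hxS
      have haE : a ∉ (↑(S.erase x) : Set V) := by
        intro h
        exact haS (Finset.mem_of_mem_erase (Finset.mem_coe.mp h))
      have hbE : b ∉ (↑(S.erase x) : Set V) := by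
        intro h
        exact hbS (Finset.mem_of_mem_erase (Finset.mem_coe.mp h))
      have hsep' : SepP (S.erase x) := by
        refine ⟨fun h => haS (Finset.mem_of_mem_erase h),
          fun h => hbS (Finset.mem_of_mem_erase h), ?_⟩
        rintro ⟨p⟩
        by_cases hxp : x ∈ p.support
        · apply hcon
          constructor
          · obtain ⟨y, ⟨q, hq⟩, hyx⟩ := neighbor_before p x hxp (fun h => haSc (h ▸ hxSc))
            have hyA : y ∈ A := by
              apply reachable_avoid q
              intro z hz
              have h1 := avoid_support_not_mem q haE z hz
              intro hzS
              apply h1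
              simp only [Finset.coe_erase, Set.mem_diff, Set.mem_singleton_iff]
              exact ⟨hzS, fun hzx => hq (hzx ▸ hz)⟩
            exact ⟨y, hyA, hyx.1.symm⟩
          · have hxp' : x ∈ p.reverse.support := by
              rw [Walk.support_reverse, List.mem_reverse]; exact hxp
            obtain ⟨y, ⟨q, hq⟩, hyx⟩ :=
              neighbor_before p.reverse x hxp' (fun h => hbSc (h ▸ hxSc))
            have hyB : y ∈ B := by
              apply reachable_avoid q
              intro z hz
              have h1 := avoid_support_not_mem q hbE z hz
              intro hzS
              apply h1
              simp only [Finset.coe_erase, Set.mem_diff, Set.mem_singleton_iff]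
              exact ⟨hzS, fun hzx => hq (hzx ▸ hz)⟩
            exact ⟨y, hyB, hyx.1.symm⟩
        · exfalso
          apply hnreach
          apply reachable_avoid p
          intro z hz
          have h1 := avoid_support_not_mem p haE z hz
          intro hzS
          apply h1
          simp only [Finset.coe_erase, Set.mem_diff, Set.mem_singleton_iff]
          exact ⟨hzS, fun hzx => hxp (hzx ▸ hz)⟩
      have hlt := hSmin' _ hsep'
      have hc := Finset.card_erase_of_mem hxS
      have hpos : 0 < S.card := Finset.card_pos.mpr ⟨x, hxS⟩
      omega
    have hconnA : ∀ u ∈ A, ∀ w ∈ A, ∃ p : G.Walk u w, ∀ z ∈ p.support, z ∈ A := by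
      intro u hu w hw
      obtain ⟨p⟩ := (hu : (avoid G (↑S : Set V)).Reachable a u).symm.trans hw
      refine ⟨p.transfer G ?_, ?_⟩
      · intro e he
        exact SimpleGraph.edgeSet_mono havle (p.edges_subset_edgeSet he)
      · intro z hz
        rw [Walk.support_transfer] at hz
        exact hu.trans ⟨p.takeUntil z hz⟩
    have hconnB : ∀ u ∈ B, ∀ w ∈ B, ∃ p : G.Walk u w, ∀ z ∈ p.support, z ∈ B := by
      intro u hu w hw
      obtain ⟨p⟩ := (hu : (avoid G (↑S : Set V)).Reachable b u).symm.trans hw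
      refine ⟨p.transfer G ?_, ?_⟩
      · intro e he
        exact SimpleGraph.edgeSet_mono havle (p.edges_subset_edgeSet he)
      · intro z hz
        rw [Walk.support_transfer] at hz
        exact hu.trans ⟨p.takeUntil z hz⟩
    have hABadj : ∀ u ∈ A, ∀ w ∈ B, ¬G.Adj u w := by
      intro u hu w hw hadj
      exact hAB w (hAext u hu w hadj (hBS w hw)) hw
    have hSclique : ∀ x ∈ (↑S : Set V), ∀ y ∈ (↑S : Set V), x ≠ y → G.Adj x y := by
      intro x hx y hy hxy
      obtain ⟨hax, hbx⟩ := hnbr x (by simpa using hx)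
      obtain ⟨hay, hby⟩ := hnbr y (by simpa using hy)
      exact adj_of_two_sides hch hxy hAB hABadj hconnA hconnB hax hay hbx hby
    have hside : ∀ (C : Set V) (c0 w0 : V), c0 ∈ C → w0 ∉ C → w0 ∉ (↑S : Set V) →
        (∀ u ∈ C, ∀ z, G.Adj u z → z ∉ (↑S : Set V) → z ∈ C) →
        ∃ v ∈ C, Simplicial G v := by
      intro C c0 w0 hc0 hw0C hw0S hCext
      have hbW : w0 ∉ C ∪ (↑S : Set V) := by
        intro h
        rcases h with h | h
        · exact hw0C h
        · exact hw0S h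
      have hcW : Nat.card ↥(C ∪ (↑S : Set V)) ≤ m := by
        have h1 : C ∪ (↑S : Set V) ≠ Set.univ := by
          intro h
          exact hbW (h ▸ Set.mem_univ w0)
        have h2 := Set.ncard_lt_ncard (Set.ssubset_univ_iff.mpr h1) Set.finite_univ
        rw [Set.ncard_univ] at h2
        have h3 : Nat.card ↥(C ∪ (↑S : Set V)) = (C ∪ (↑S : Set V)).ncard :=
          Nat.card_coe_set_eq _
        omega
      haveI : Fintype ↥(C ∪ (↑S : Set V)) := Fintype.ofFinite _
      have hchW : Chordal (G.induce (C ∪ (↑S : Set V))) :=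
        chordal_of_embedding (SimpleGraph.Embedding.induce _) hch
      have hres := IH (G.induce (C ∪ (↑S : Set V))) hcW hchW
      have hnbrs' : ∀ v ∈ C, ∀ z, G.Adj v z → z ∈ C ∪ (↑S : Set V) := by
        intro v hv z hadj
        by_cases hzS : z ∈ (↑S : Set V)
        · exact Set.mem_union_right _ hzS
        · exact Set.mem_union_left _ (hCext v hv z hadj hzS)
      exact simplicial_from_side hnbrs' hSclique hres hc0
    obtain ⟨vA, hvA, hsA⟩ := hside A a b haA (fun h => hAB b h hbB) hbSc hAext
    obtain ⟨vB, hvB, hsB⟩ := hside B b a hbB (fun h => hAB a haA h) haSc hBext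
    exact ⟨vA, vB, fun h => hAB vA hvA (h ▸ hvB),
      fun hadj => hAB vB (hAext vA hvA vB hadj (hBS vB hvB)) hvB, hsA, hsB⟩

theorem dirac {V : Type} [Fintype V] [Nonempty V] (G : SimpleGraph V) (hch : Chordal G) :
    ∃ v, Simplicial G v := by
  rcases dirac_aux (Nat.card V) G le_rfl hch with h | ⟨v, _, _, _, hv, _⟩
  · exact ⟨Classical.arbitrary V, fun a b _ _ hne => h a b hne⟩
  · exact ⟨v, hv⟩
/-! ### Backward direction: constructing a representation from a simplicial vertex -/

theorem extend_rep {N n : ℕ} (T : RootedTree N) (S' : Fin n → Set (Fin N))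
    (G₂ : SimpleGraph (Fin (n+1)))
    (hsub' : ∀ a, IsSubtree T (S' a))
    (hrep' : ∀ a b : Fin n, a ≠ b → (G₂.Adj a.castSucc b.castSucc ↔ (S' a ∩ S' b).Nonempty))
    (hsimp : ∀ a b : Fin n, G₂.Adj (Fin.last n) a.castSucc → G₂.Adj (Fin.last n) b.castSucc →
      a ≠ b → G₂.Adj a.castSucc b.castSucc) :
    ∃ (M : ℕ) (T₂ : RootedTree M) (S₂ : Fin (n+1) → Set (Fin M)),
      (∀ x, IsSubtree T₂ (S₂ x)) ∧
        ∀ u w, u ≠ w → (G₂.Adj u w ↔ (S₂ u ∩ S₂ w).Nonempty) := by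
  classical
  have hsub'' : ∀ a, ∃ t, t ∈ S' a ∧ (∀ u ∈ S' a, T.Anc t u) ∧
      ∀ u ∈ S' a, u ≠ t → T.parent u ∈ S' a := by
    intro a; obtain ⟨_, t, h1, h2, h3⟩ := hsub' a; exact ⟨t, h1, h2, h3⟩
  choose top htmem htanc htcl using hsub''
  set K : Set (Fin n) := {a | G₂.Adj (Fin.last n) a.castSucc} with hK
  have hKclique : ∀ a ∈ K, ∀ b ∈ K, a ≠ b → G₂.Adj a.castSucc b.castSucc :=
    fun a ha b hb hab => hsimp a b ha hb hab
  -- a node common to all subtrees of vertices in K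
  have hc : ∃ c, ∀ a ∈ K, c ∈ S' a := by
    rcases Set.eq_empty_or_nonempty K with hKe | ⟨a0', ha0'⟩
    · exact ⟨T.root, fun a ha => absurd ha (by rw [hKe]; exact Set.notMem_empty a)⟩
    · obtain ⟨a0, ha0, hmax⟩ := Finset.exists_max_image
        (Finset.univ.filter (· ∈ K)) (fun a => T.depth (top a))
        ⟨a0', Finset.mem_filter.mpr ⟨Finset.mem_univ _, ha0'⟩⟩
      have ha0K : a0 ∈ K := (Finset.mem_filter.mp ha0).2
      refine ⟨top a0, fun a ha => ?_⟩
      by_cases haa : a = a0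
      · subst haa; exact htmem a
      · have hadj : G₂.Adj a0.castSucc a.castSucc :=
          hKclique a0 ha0K a ha (fun h => haa h.symm)
        obtain ⟨x, hx0, hx⟩ := (hrep' a0 a (fun h => haa h.symm)).mp hadj
        exact mem_of_inter (htmem a) (htcl a) hx (htanc a0 x hx0)
          (hmax a (Finset.mem_filter.mpr ⟨Finset.mem_univ _, ha⟩))
  obtain ⟨c, hcK⟩ := hc
  -- the extended tree
  have hcs : ∀ u : Fin N, Fin.castSucc u ≠ Fin.last N := fun u => (Fin.castSucc_lt_last u).ne
  set par2 : Fin (N+1) → Fin (N+1) := fun u =>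
    if h : u = Fin.last N then Fin.castSucc c else Fin.castSucc (T.parent (u.castPred h))
    with hpar2def
  set dep2 : Fin (N+1) → ℕ := fun u =>
    if h : u = Fin.last N then T.depth c + 1 else T.depth (u.castPred h) with hdep2def
  have hpar2 : ∀ u : Fin N, par2 (Fin.castSucc u) = Fin.castSucc (T.parent u) := by
    intro u
    rw [hpar2def]
    simp only [dif_neg (hcs u), Fin.castPred_castSucc]
  have hdep2 : ∀ u : Fin N, dep2 (Fin.castSucc u) = T.depth u := by
    intro u
    rw [hdep2def]
    simp only [dif_neg (hcs u), Fin.castPred_castSucc]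
  have hpar2l : par2 (Fin.last N) = Fin.castSucc c := by rw [hpar2def]; simp
  have hdep2l : dep2 (Fin.last N) = T.depth c + 1 := by rw [hdep2def]; simp
  set T₂ : RootedTree (N+1) :=
    { parent := par2
      root := Fin.castSucc T.root
      depth := dep2
      depth_root := by rw [hdep2, T.depth_root]
      parent_root := by rw [hpar2, T.parent_root]
      depth_parent := by
        intro i hi
        rcases Fin.eq_castSucc_or_eq_last i with ⟨j, rfl⟩ | rfl
        · rw [hpar2, hdep2, hdep2]
          exact T.depth_parent j (fun h => hi (congrArg Fin.castSucc h))
        · rw [hpar2l, hdep2l, hdep2] } with hT2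
  have hT2par : T₂.parent = par2 := rfl
  -- iterates on the extended tree
  have hit : ∀ (k : ℕ) (u : Fin N),
      par2^[k] (Fin.castSucc u) = Fin.castSucc (T.parent^[k] u) := by
    intro k
    induction k with
    | zero => intro u; simp
    | succ k ih =>
      intro u
      rw [Function.iterate_succ_apply, hpar2, ih, ← Function.iterate_succ_apply]
  have hanc_cc : ∀ u w : Fin N, T.Anc u w → T₂.Anc u.castSucc w.castSucc := by
    rintro u w ⟨k, hk⟩
    exact ⟨k, by rw [hT2par, hit, hk]⟩
  have hanc_last : ∀ u : Fin N, T.Anc u c → T₂.Anc u.castSucc (Fin.last N) := by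
    rintro u ⟨k, hk⟩
    refine ⟨k + 1, ?_⟩
    rw [hT2par, Function.iterate_succ_apply, hpar2l, hit, hk]
  -- the extended family of subtrees
  set S₂ : Fin (n+1) → Set (Fin (N+1)) := fun x =>
    if h : x = Fin.last n then {Fin.last N}
    else (Fin.castSucc '' S' (x.castPred h)) ∪ {z | z = Fin.last N ∧ (x.castPred h) ∈ K}
    with hS2def
  have hcsn : ∀ a : Fin n, Fin.castSucc a ≠ Fin.last n := fun a => (Fin.castSucc_lt_last a).ne
  have hS2l : S₂ (Fin.last n) = {Fin.last N} := by rw [hS2def]; simp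
  have hS2c : ∀ a : Fin n, S₂ a.castSucc =
      (Fin.castSucc '' S' a) ∪ {z | z = Fin.last N ∧ a ∈ K} := by
    intro a
    rw [hS2def]
    simp only [dif_neg (hcsn a), Fin.castPred_castSucc]
  refine ⟨N+1, T₂, S₂, ?_, ?_⟩
  · -- subtree property
    intro x
    rcases Fin.eq_castSucc_or_eq_last x with ⟨a, rfl⟩ | rfl
    · rw [hS2c]
      refine ⟨⟨(top a).castSucc, Or.inl ⟨top a, htmem a, rfl⟩⟩,
        (top a).castSucc, Or.inl ⟨top a, htmem a, rfl⟩, ?_, ?_⟩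
      · rintro u (⟨u', hu', rfl⟩ | ⟨rfl, haK⟩)
        · exact hanc_cc _ _ (htanc a u' hu')
        · exact hanc_last _ (htanc a c (hcK a haK))
      · rintro u (⟨u', hu', rfl⟩ | ⟨rfl, haK⟩) hne
        · have hne' : u' ≠ top a := fun h => hne (congrArg Fin.castSucc h)
          rw [hT2par, hpar2]
          exact Or.inl ⟨T.parent u', htcl a u' hu' hne', rfl⟩
        · rw [hT2par, hpar2l]
          exact Or.inl ⟨c, hcK a haK, rfl⟩
    · rw [hS2l]
      exact ⟨⟨Fin.last N, rfl⟩, Fin.last N, rfl, fun u hu => hu ▸ ⟨0, rfl⟩,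
        fun u hu hne => absurd hu hne⟩
  · -- representation property
    intro u w hne
    rcases Fin.eq_castSucc_or_eq_last u with ⟨a, rfl⟩ | rfl <;>
      rcases Fin.eq_castSucc_or_eq_last w with ⟨b, rfl⟩ | rfl
    · have hab : a ≠ b := fun h => hne (congrArg Fin.castSucc h)
      rw [hS2c, hS2c]
      constructor
      · intro hadj
        obtain ⟨x, hx1, hx2⟩ := (hrep' a b hab).mp hadj
        exact ⟨x.castSucc, Or.inl ⟨x, hx1, rfl⟩, Or.inl ⟨x, hx2, rfl⟩⟩
      · rintro ⟨z, (⟨x, hx, rfl⟩ | ⟨rfl, haK⟩), hz2⟩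
        · rcases hz2 with ⟨x', hx', hxx⟩ | ⟨hzl, _⟩
          · have : x = x' := Fin.castSucc_injective _ hxx.symm
            subst this
            exact (hrep' a b hab).mpr ⟨x, hx, hx'⟩
          · exact absurd hzl (hcs x)
        · rcases hz2 with ⟨x', _, hxx⟩ | ⟨_, hbK⟩
          · exact absurd hxx.symm (hcs x').symm
          · exact hKclique a haK b hbK hab
    · -- u = castSucc a, w = last
      rw [hS2c, hS2l]
      constructor
      · intro hadj
        exact ⟨Fin.last N, Or.inr ⟨rfl, hadj.symm⟩, rfl⟩
      · rintro ⟨z, hz1, rfl⟩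
        rcases hz1 with ⟨x, _, hxx⟩ | ⟨_, haK⟩
        · exact absurd hxx.symm (hcs x).symm
        · exact haK.symm
    · -- u = last, w = castSucc b
      rw [hS2l, hS2c]
      constructor
      · intro hadj
        exact ⟨Fin.last N, rfl, Or.inr ⟨rfl, hadj⟩⟩
      · rintro ⟨z, rfl, hz2⟩
        rcases hz2 with ⟨x, _, hxx⟩ | ⟨_, hbK⟩
        · exact absurd hxx.symm (hcs x).symm
        · exact hbK
    · exact absurd rfl hne

theorem rep_of_chordal : ∀ (n : ℕ) (G : SimpleGraph (Fin n)), Chordal G →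
    ∃ (N : ℕ) (T : RootedTree N) (S : Fin n → Set (Fin N)),
      (∀ v, IsSubtree T (S v)) ∧ ∀ u w, u ≠ w → (G.Adj u w ↔ (S u ∩ S w).Nonempty) := by
  intro n
  induction n with
  | zero =>
    intro G _
    exact ⟨1, ⟨id, 0, fun _ => 0, rfl, rfl, fun i hi => absurd (Subsingleton.elim i 0) hi⟩,
      Fin.elim0, fun v => v.elim0, fun u => u.elim0⟩
  | succ n IH =>
    intro G hch
    classical
    obtain ⟨v0, hv0⟩ := dirac G hch
    set σ : Equiv.Perm (Fin (n+1)) := Equiv.swap v0 (Fin.last n) with hσ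
    set G₂ : SimpleGraph (Fin (n+1)) := SimpleGraph.comap (⇑σ) G with hG2
    have hch2 : Chordal G₂ :=
      chordal_of_embedding (SimpleGraph.Embedding.comap σ.toEmbedding G) hch
    have hsimp2 : ∀ a b : Fin (n+1), G₂.Adj (Fin.last n) a → G₂.Adj (Fin.last n) b →
        a ≠ b → G₂.Adj a b := by
      intro a b h1 h2 hab
      have e : σ (Fin.last n) = v0 := Equiv.swap_apply_right _ _
      have h1' : G.Adj v0 (σ a) := by rw [← e]; exact h1
      have h2' : G.Adj v0 (σ b) := by rw [← e]; exact h2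
      exact hv0 (σ a) (σ b) h1' h2' (fun h => hab (σ.injective h))
    set G' : SimpleGraph (Fin n) := SimpleGraph.comap Fin.castSucc G₂ with hG'
    have hch' : Chordal G' :=
      chordal_of_embedding
        (SimpleGraph.Embedding.comap ⟨Fin.castSucc, Fin.castSucc_injective n⟩ G₂) hch2
    obtain ⟨N, T, S', hsub', hrep'⟩ := IH G' hch'
    obtain ⟨M, T₂, S₂, hs2, hr2⟩ := extend_rep T S' G₂ hsub'
      (fun a b hab => hrep' a b hab)
      (fun a b h1 h2 hab => hsimp2 _ _ h1 h2 (fun h => hab (Fin.castSucc_injective n h)))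
    refine ⟨M, T₂, fun u => S₂ (σ u), fun u => hs2 _, ?_⟩
    intro u w hne
    have h1 : G.Adj u w ↔ G₂.Adj (σ u) (σ w) := by
      have h2 : G₂.Adj (σ u) (σ w) ↔ G.Adj (σ (σ u)) (σ (σ w)) := Iff.rfl
      rw [Equiv.swap_apply_self, Equiv.swap_apply_self] at h2
      exact h2.symm
    rw [h1]
    exact hr2 (σ u) (σ w) (fun h => hne (σ.injective h))
/-- A graph has a representation as a vertex-intersection graph of
subtrees of a tree iff it is chordal. -/
theorem stmt15 {n : ℕ} (G : SimpleGraph (Fin n)) :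
    (∃ N : ℕ, ∃ T : RootedTree N, ∃ S : Fin n → Set (Fin N),
        (∀ v, IsSubtree T (S v)) ∧
          ∀ u w, u ≠ w → (G.Adj u w ↔ (S u ∩ S w).Nonempty)) ↔
      Chordal G := by
  constructor
  · rintro ⟨N, T, S, hsub, hrep⟩
    exact chordal_of_rep T S hsub hrep
  · intro hch
    exact rep_of_chordal n G hch


end Paper
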